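/- Let k be an algebraically closed field, let R = k[x_1, …, x_n], let f_1, …, f_m ∈ R, let I be the ideal of R generated by f_1, …, f_m, and fix r ≥ 1. Let M ⊆ R be the ideal generated by all r×r minors of the Jacobian matrix (∂f_i/∂x_j), i.e., by all determinants det(∂f_{β(i)}/∂x_{α(j)})_{1 ≤ i, j ≤ r} over all choices of r rows β: {1,…,r} → {1,…,m} and r columns α: {1,…,r} → {1,…,n}. Then for every derivation η ∈ Der_k(R) with η(I) ⊆ I and every such minor Δ = det(∂f_{β(i)}/∂x_{α(j)}), one has η(Δ) ∈ M + I. -/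

import Mathlib

open MvPolynomial Matrix Finset Equiv

section Aux

variable {k : Type*} [CommRing k] {n r : ℕ}

private lemma aux_pderiv_comm (i j : Fin n) (p : MvPolynomial (Fin n) k) :
    pderiv i (pderiv j p) = pderiv j (pderiv i p) := by
  induction p using MvPolynomial.induction_on with
  | C a => simp
  | add p q hp hq => simp [hp, hq]
  | mul_X p s hp => simp only [pderiv_mul, map_add, pderiv_mul, hp, pderiv_X]; ring_nf
                    simp [Pi.single_apply, apply_ite (pderiv i), apply_ite (pderiv j)]

private lemma derivation_sum_apply {ι : Type*} (s : Finset ι)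
    (D : ι → Derivation k (MvPolynomial (Fin n) k) (MvPolynomial (Fin n) k))
    (p : MvPolynomial (Fin n) k) :
    (∑ l ∈ s, D l) p = ∑ l ∈ s, D l p := by
  induction s using Finset.cons_induction with
  | empty => rfl
  | cons i s hi ih => simp [Finset.sum_cons, ih]

private lemma derivation_apply_eq_sum
    (η : Derivation k (MvPolynomial (Fin n) k) (MvPolynomial (Fin n) k))
    (p : MvPolynomial (Fin n) k) :
    η p = ∑ l, η (X l) * pderiv l p := by
  have h : η = ∑ l : Fin n, η (X l) • (pderiv l :
      Derivation k (MvPolynomial (Fin n) k) (MvPolynomial (Fin n) k)) := by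
    apply MvPolynomial.derivation_ext
    intro i
    rw [derivation_sum_apply]
    simp [Derivation.coe_smul, pderiv_X, Pi.single_apply]
  conv_lhs => rw [h]
  rw [derivation_sum_apply]
  simp [Derivation.coe_smul, smul_eq_mul]

private lemma derivation_pderiv_comm
    (η : Derivation k (MvPolynomial (Fin n) k) (MvPolynomial (Fin n) k))
    (j : Fin n) (p : MvPolynomial (Fin n) k) :
    η (pderiv j p) = pderiv j (η p) - ∑ l, pderiv j (η (X l)) * pderiv l p := by
  rw [derivation_apply_eq_sum η p, derivation_apply_eq_sum η (pderiv j p), map_sum]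
  simp only [pderiv_mul]
  rw [eq_sub_iff_add_eq, ← Finset.sum_add_distrib]
  refine Finset.sum_congr rfl fun l _ => ?_
  rw [aux_pderiv_comm]
  ring

private lemma derivation_prod {A : Type*} [CommRing A] [Algebra k A] (D : Derivation k A A)
    {ι : Type*} [DecidableEq ι] (s : Finset ι) (a : ι → A) :
    D (∏ i ∈ s, a i) = ∑ i ∈ s, (∏ j ∈ s.erase i, a j) * D (a i) := by
  induction s using Finset.cons_induction with
  | empty => simp
  | cons i s hi ih =>
    rw [Finset.prod_cons, D.leibniz, smul_eq_mul, smul_eq_mul, ih, Finset.sum_cons, Finset.mul_sum,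
      Finset.erase_cons hi]
    rw [add_comm]
    congr 1
    refine Finset.sum_congr rfl fun p hp => ?_
    rw [Finset.erase_cons_of_ne hi (fun h => hi (h ▸ hp)), Finset.prod_cons]
    ring

private lemma derivation_det_col {A : Type*} [CommRing A] [Algebra k A] (D : Derivation k A A)
    (M : Matrix (Fin r) (Fin r) A) :
    D M.det = ∑ j, (M.updateCol j (fun i => D (M i j))).det := by
  have det_eq : ∀ N : Matrix (Fin r) (Fin r) A,
      N.det = ∑ σ : Perm (Fin r), ((Equiv.Perm.sign σ : ℤ) : A) * ∏ i, N (σ i) i := by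
    intro N; rw [Matrix.det_apply]
    exact Finset.sum_congr rfl fun σ _ => by rw [Units.smul_def, zsmul_eq_mul]
  rw [det_eq, map_sum]
  calc ∑ σ : Perm (Fin r), D (((Equiv.Perm.sign σ : ℤ) : A) * ∏ i, M (σ i) i)
      = ∑ σ : Perm (Fin r), ((Equiv.Perm.sign σ : ℤ) : A) *
          ∑ i, (∏ j ∈ univ.erase i, M (σ j) j) * D (M (σ i) i) := by
        refine Finset.sum_congr rfl fun σ _ => ?_
        rw [Derivation.leibniz, Derivation.map_intCast, smul_zero, add_zero, smul_eq_mul,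
          derivation_prod]
    _ = ∑ j, ∑ σ : Perm (Fin r), ((Equiv.Perm.sign σ : ℤ) : A) *
          ((∏ i ∈ univ.erase j, M (σ i) i) * D (M (σ j) j)) := by
        rw [Finset.sum_comm]
        refine Finset.sum_congr rfl fun σ _ => ?_
        rw [Finset.mul_sum]
    _ = ∑ j, (M.updateCol j (fun i => D (M i j))).det := by
        refine Finset.sum_congr rfl fun j _ => ?_
        rw [det_eq]
        refine Finset.sum_congr rfl fun σ _ => ?_
        congr 1
        rw [← Finset.mul_prod_erase _ _ (Finset.mem_univ j)]
        rw [Matrix.updateCol_self]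
        rw [mul_comm]
        congr 1
        refine Finset.prod_congr rfl fun i hi => ?_
        rw [Matrix.updateCol_ne (Finset.ne_of_mem_erase hi)]

private lemma derivation_det_row {A : Type*} [CommRing A] [Algebra k A] (D : Derivation k A A)
    (M : Matrix (Fin r) (Fin r) A) :
    D M.det = ∑ i, (M.updateRow i (fun j => D (M i j))).det := by
  conv_lhs => rw [← Matrix.det_transpose M]
  rw [derivation_det_col D Mᵀ]
  refine Finset.sum_congr rfl fun i _ => ?_
  rw [← Matrix.det_transpose (M.updateRow i fun j => D (M i j)), ← Matrix.updateCol_transpose]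
  rfl

private lemma det_updateRow_sum' {A : Type*} [CommRing A] (M : Matrix (Fin r) (Fin r) A)
    (i : Fin r) {ι : Type*} (s : Finset ι) (w : ι → Fin r → A) :
    (M.updateRow i (fun j => ∑ p ∈ s, w p j)).det = ∑ p ∈ s, (M.updateRow i (w p)).det := by
  induction s using Finset.cons_induction with
  | empty =>
    rw [Finset.sum_empty]
    apply Matrix.det_eq_zero_of_row_eq_zero i
    intro j
    simp [Matrix.updateRow_self]
  | cons p s hp ih =>
    rw [Finset.sum_cons, ← ih]
    have : (fun j => ∑ q ∈ Finset.cons p s hp, w q j) = w p + fun j => ∑ q ∈ s, w q j := by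
      funext j; simp [Finset.sum_cons]
    rw [this, Matrix.det_updateRow_add]

private lemma det_updateRow_mem_ideal {A : Type*} [CommRing A] (M : Matrix (Fin r) (Fin r) A)
    (i : Fin r) (v : Fin r → A) (J : Ideal A) (h : ∀ j, v j ∈ J) :
    (M.updateRow i v).det ∈ J := by
  rw [Matrix.det_apply]
  refine Submodule.sum_mem _ fun σ _ => ?_
  rw [Units.smul_def, zsmul_eq_mul]
  refine Ideal.mul_mem_left _ _ ?_
  rw [← Finset.mul_prod_erase _ _ (Finset.mem_univ (σ⁻¹ i))]
  have h1 : (M.updateRow i v) (σ (σ⁻¹ i)) (σ⁻¹ i) = v (σ⁻¹ i) := by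
    rw [show σ (σ⁻¹ i) = i from σ.apply_symm_apply i, Matrix.updateRow_self]
  rw [h1]
  exact Ideal.mul_mem_right _ _ (h _)

private lemma sum_mul_det_updateRow {A : Type*} [CommRing A] (M : Matrix (Fin r) (Fin r) A)
    (b u : Fin r → A) :
    ∑ i, b i * (M.updateRow i u).det = ∑ j, u j * (M.updateCol j b).det := by
  simp only [← Matrix.cramer_transpose_apply, ← Matrix.cramer_apply,
    Matrix.cramer_eq_adjugate_mulVec, Matrix.mulVec, dotProduct,
    ← Matrix.adjugate_transpose, Matrix.transpose_apply]
  simp only [Finset.mul_sum]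
  rw [Finset.sum_comm]
  exact Finset.sum_congr rfl fun x _ => Finset.sum_congr rfl fun y _ => by ring

end Aux

/-- A derivation of the polynomial ring preserving the ideal `I = (f_1, …, f_m)` sends every
`r × r` minor of the Jacobian matrix `(∂f_i/∂x_j)` into `M + I`, where `M` is the ideal
generated by all `r × r` minors of the Jacobian. -/
theorem derivation_maps_jacobian_minor_into_minors_ideal
    (k : Type*) [Field k] [IsAlgClosed k]
    (n m r : ℕ) (hr : 1 ≤ r)
    (f : Fin m → MvPolynomial (Fin n) k)
    (η : Derivation k (MvPolynomial (Fin n) k) (MvPolynomial (Fin n) k))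
    (hη : ∀ p ∈ Ideal.span (Set.range f), η p ∈ Ideal.span (Set.range f))
    (α : Fin r → Fin n) (β : Fin r → Fin m) :
    η (Matrix.det (Matrix.of fun i j : Fin r => MvPolynomial.pderiv (α j) (f (β i)))) ∈
      Ideal.span { q : MvPolynomial (Fin n) k |
          ∃ (α' : Fin r → Fin n) (β' : Fin r → Fin m),
            q = Matrix.det (Matrix.of fun i j : Fin r => MvPolynomial.pderiv (α' j) (f (β' i))) }
        ⊔ Ideal.span (Set.range f) := by
  classical
  set A : Matrix (Fin r) (Fin r) (MvPolynomial (Fin n) k) :=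
    Matrix.of fun i j : Fin r => pderiv (α j) (f (β i)) with hA
  set I : Ideal (MvPolynomial (Fin n) k) := Ideal.span (Set.range f) with hI
  set Mid : Ideal (MvPolynomial (Fin n) k) := Ideal.span { q : MvPolynomial (Fin n) k |
      ∃ (α' : Fin r → Fin n) (β' : Fin r → Fin m),
        q = Matrix.det (Matrix.of fun i j : Fin r => pderiv (α' j) (f (β' i))) } with hMid
  have minor_mem : ∀ (α' : Fin r → Fin n) (β' : Fin r → Fin m),
      (Matrix.of fun i j : Fin r => pderiv (α' j) (f (β' i))).det ∈ Mid :=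
    fun α' β' => Ideal.subset_span ⟨α', β', rfl⟩
  rw [derivation_det_row]
  have split : ∀ i₀ : Fin r,
      (A.updateRow i₀ fun j => η (A i₀ j)).det
        = (A.updateRow i₀ fun j => pderiv (α j) (η (f (β i₀)))).det
          + (A.updateRow i₀ fun j =>
              -∑ l, pderiv (α j) (η (X l)) * pderiv l (f (β i₀))).det := by
    intro i₀
    have hrow0 : (fun j => η (A i₀ j))
        = (fun j => pderiv (α j) (η (f (β i₀)))) + fun j =>
            -∑ l, pderiv (α j) (η (X l)) * pderiv l (f (β i₀)) := by
      funext j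
      show η (pderiv (α j) (f (β i₀))) = _
      rw [derivation_pderiv_comm]
      simp [sub_eq_add_neg]
    rw [hrow0, Matrix.det_updateRow_add]
  simp only [split]
  rw [Finset.sum_add_distrib]
  refine Submodule.add_mem _ ?_ ?_
  · -- first part
    refine Submodule.sum_mem _ fun i₀ _ => ?_
    obtain ⟨c, hc⟩ := Ideal.mem_span_range_iff_exists_fun.mp
      (hη (f (β i₀)) (Ideal.subset_span ⟨β i₀, rfl⟩))
    have hrow : (fun j => pderiv (α j) (η (f (β i₀)))) =
        fun j => ∑ p, (pderiv (α j) (c p) * f p + c p * pderiv (α j) (f p)) := by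
      funext j
      rw [← hc, map_sum]
      exact Finset.sum_congr rfl fun p _ => pderiv_mul
    rw [hrow, det_updateRow_sum']
    refine Submodule.sum_mem _ fun p _ => ?_
    have h2 : (fun j => pderiv (α j) (c p) * f p + c p * pderiv (α j) (f p))
        = (fun j => pderiv (α j) (c p) * f p) + fun j => c p * pderiv (α j) (f p) := rfl
    rw [h2, Matrix.det_updateRow_add]
    refine Submodule.add_mem _ ?_ ?_
    · refine Ideal.mem_sup_right (det_updateRow_mem_ideal _ _ _ _ fun j => ?_)
      exact Ideal.mul_mem_left _ _ (Ideal.subset_span ⟨p, rfl⟩)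
    · have h3 : (fun j => c p * pderiv (α j) (f p)) = c p • fun j => pderiv (α j) (f p) := rfl
      rw [h3, Matrix.det_updateRow_smul]
      refine Ideal.mem_sup_left (Ideal.mul_mem_left _ _ ?_)
      have h4 : A.updateRow i₀ (fun j => pderiv (α j) (f p))
          = Matrix.of fun i j : Fin r => pderiv (α j) (f (Function.update β i₀ p i)) := by
        funext i j
        rcases eq_or_ne i i₀ with h | h
        · subst h; simp [Matrix.updateRow_self]
        · simp [Matrix.updateRow_ne h, Function.update_of_ne h, hA]
      rw [h4]
      exact minor_mem _ _
  · -- second part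
    have step1 : ∀ i₀ : Fin r,
        (A.updateRow i₀ fun j => -∑ l, pderiv (α j) (η (X l)) * pderiv l (f (β i₀))).det
        = ∑ l, (-(pderiv l (f (β i₀)))) *
            (A.updateRow i₀ fun j => pderiv (α j) (η (X l))).det := by
      intro i₀
      have hrow : (fun j => -∑ l, pderiv (α j) (η (X l)) * pderiv l (f (β i₀)))
          = fun j => ∑ l, ((-(pderiv l (f (β i₀)))) •
              fun j' => pderiv (α j') (η (X l))) j := by
        funext j
        rw [← Finset.sum_neg_distrib]
        exact Finset.sum_congr rfl fun l _ => by simp [smul_eq_mul]; ring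
      rw [hrow, det_updateRow_sum']
      exact Finset.sum_congr rfl fun l _ => Matrix.det_updateRow_smul _ _ _ _
    simp only [step1]
    rw [Finset.sum_comm]
    refine Submodule.sum_mem _ fun l _ => ?_
    have h5 : ∑ i₀, (-(pderiv l (f (β i₀)))) *
          (A.updateRow i₀ fun j => pderiv (α j) (η (X l))).det
        = -∑ i₀, pderiv l (f (β i₀)) *
          (A.updateRow i₀ fun j => pderiv (α j) (η (X l))).det := by
      rw [← Finset.sum_neg_distrib]
      exact Finset.sum_congr rfl fun _ _ => by ring
    rw [h5, sum_mul_det_updateRow A (fun i => pderiv l (f (β i)))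
      (fun j => pderiv (α j) (η (X l)))]
    refine Submodule.neg_mem _ (Submodule.sum_mem _ fun j _ => ?_)
    refine Ideal.mem_sup_left (Ideal.mul_mem_left _ _ ?_)
    have h6 : A.updateCol j (fun i => pderiv l (f (β i)))
        = Matrix.of fun i j' : Fin r => pderiv (Function.update α j l j') (f (β i)) := by
      funext i j'
      rcases eq_or_ne j' j with h | h
      · subst h; simp [Matrix.updateCol_self]
      · simp [Matrix.updateCol_ne h, Function.update_of_ne h, hA]
    rw [h6]
    exact minor_mem _ _
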